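/- Let a, b and n > 3 be positive integers, set a_m = r_b(n) + a·r_b(m-1) for 1 ≤ m ≤ n, fix i with 1 ≤ i ≤ n, and let k be a field. Let I_2(Y) ⊆ k[x_1,…,x_n] be the ideal generated by the 2×2 minors of Y. Then the set of these minors is a Gröbner basis of I_2(Y) with respect to ≺_i: for every nonzero f ∈ I_2(Y), there exist j, k with 1 ≤ j < k ≤ n-1 such that the ≺_i-leading monomial of the minor x_{j+1}·x_k^b − x_j^b·x_{k+1} divides the ≺_i-leading monomial of f. -/

import Mathlib

/-- The ℓ-th repunit in base `b`: `r_b(ℓ) = ∑_{j=0}^{ℓ-1} b^j`, with `r_b(0) = 0`. -/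
def rep (b ℓ : ℕ) : ℕ := ∑ j ∈ Finset.range ℓ, b ^ j

/-- `a_m = r_b(n) + a · r_b(m-1)`. -/
def aseq (a b n m : ℕ) : ℕ := rep b n + a * rep b (m - 1)

/-- Rank of the (0-indexed) variable `m` (i.e. `x_{m+1}` in 1-indexed notation) for the
variable ordering `x_i ≺ x_{i-1} ≺ ⋯ ≺ x_1 ≺ x_n ≺ ⋯ ≺ x_{i+1}` (here `i` is 1-indexed);
smaller rank means smaller variable. -/
def rankv (n i : ℕ) (m : Fin n) : ℕ :=
  if (m : ℕ) + 1 ≤ i then i - ((m : ℕ) + 1) else i + (n - ((m : ℕ) + 1))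

/-- The `A`-weighted degree of an exponent vector. -/
def wdeg (a b n : ℕ) (u : Fin n → ℕ) : ℕ := ∑ m : Fin n, u m * aseq a b n ((m : ℕ) + 1)

/-- The `A`-graded reverse lexicographic order `≺_i` (with `x_i` smallest) on exponent
vectors: `u ≺_i v` iff the weighted degree of `u` is smaller, or the weighted degrees agree
and the smallest variable in which `u` and `v` differ has strictly larger exponent in `u`. -/
def prec (a b n i : ℕ) (u v : Fin n → ℕ) : Prop :=
  wdeg a b n u < wdeg a b n v ∨
    (wdeg a b n u = wdeg a b n v ∧
      ∃ m : Fin n, v m < u m ∧ ∀ m' : Fin n, rankv n i m' < rankv n i m → u m' = v m')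

/-- `u` is the `≺_i`-leading exponent (monomial) of `f`: it appears in `f` with nonzero
coefficient and every other exponent of `f` is `≺_i`-smaller. -/
def IsLead {K : Type*} [Field K] (a b n i : ℕ) (f : MvPolynomial (Fin n) K)
    (u : Fin n →₀ ℕ) : Prop :=
  u ∈ f.support ∧ ∀ v ∈ f.support, v ≠ u →
    prec a b n i (fun m => v m) (fun m => u m)

/-- The variable `x_m` (1-indexed, `1 ≤ m ≤ n`) of `K[x_1, …, x_n]`. -/
noncomputable def xv (K : Type*) [Field K] (n m : ℕ) : MvPolynomial (Fin n) K :=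
  if h : m - 1 < n then MvPolynomial.X ⟨m - 1, h⟩ else 0

/-- The set of 2×2 minors of the matrix `Y` with rows `(x_1^b, …, x_{n-1}^b)` and
`(x_2, …, x_n)`, i.e. the binomials `x_{j+1}·x_l^b − x_j^b·x_{l+1}` for `1 ≤ j < l ≤ n-1`. -/
def minorsY (K : Type*) [Field K] (b n : ℕ) : Set (MvPolynomial (Fin n) K) :=
  { f | ∃ j l : ℕ, 1 ≤ j ∧ j < l ∧ l ≤ n - 1 ∧
      f = xv K n (j + 1) * xv K n l ^ b - xv K n j ^ b * xv K n (l + 1) }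


namespace SP


/-- 1-indexed rank: position `p ∈ [1,n]`. -/
def rk (n i p : ℕ) : ℕ := if p ≤ i then i - p else i + (n - p)

lemma rk_lt_left {n i q ps : ℕ} (hq : q ≤ i) (h : ps ≤ i) (hlt : ps < q) :
    rk n i q < rk n i ps := by
  unfold rk; rw [if_pos hq, if_pos h]; omega

lemma rk_lt_li {n i q ps : ℕ} (hq : q ≤ i) (h : i < ps) (hps : ps ≤ n) (hq1 : 1 ≤ q) :
    rk n i q < rk n i ps := by
  unfold rk; rw [if_pos hq, if_neg (by omega)]; omega

lemma rk_lt_right {n i q ps : ℕ} (hq : i < q) (h : i < ps) (hlt : ps < q) (hqn : q ≤ n) :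
    rk n i q < rk n i ps := by
  unfold rk; rw [if_neg (by omega), if_neg (by omega)]; omega

/-- right-side producer lemma -/
lemma rightLemma (b n i : ℕ) (hb : 1 ≤ b) (hin : i ≤ n - 1) (hn : 4 ≤ n) (hi1 : 1 ≤ i)
    (dd z : ℕ → ℤ)
    (hddz : ∀ p, 2 ≤ p → p ≤ n → dd p = (b+1) * z (p-1) - z (p-2) - b * z p)
    (hztop : z (n-1) = 0)
    (M : ℤ) (hM : ∃ k, i ≤ k ∧ k ≤ n-1 ∧ z k = M) (hMub : ∀ k, i ≤ k → k ≤ n-1 → z k ≤ M)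
    (hM1 : 1 ≤ M) (hzi : z (i-1) ≤ M - 1) :
    ∃ p l, i + 1 ≤ p ∧ p ≤ l ∧ l ≤ n - 1 ∧
      (p < l ∧ 1 ≤ dd p ∧ (b:ℤ) ≤ dd l ∨ p = l ∧ (b:ℤ)+1 ≤ dd l) := by
  classical
  set S := (Finset.Icc i (n-1)).filter (fun k => z k = M) with hS
  have hSne : S.Nonempty := by
    obtain ⟨k, hk1, hk2, hk3⟩ := hM
    exact ⟨k, by simp [hS, Finset.mem_filter, Finset.mem_Icc, hk1, hk2, hk3]⟩
  set mf := S.min' hSne with hmf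
  set ml := S.max' hSne with hml
  have hmfS : mf ∈ S := S.min'_mem hSne
  have hmlS : ml ∈ S := S.max'_mem hSne
  have hmf1 : i ≤ mf ∧ mf ≤ n - 1 ∧ z mf = M := by
    have := hmfS; simp [hS, Finset.mem_filter, Finset.mem_Icc] at this; tauto
  have hml1 : i ≤ ml ∧ ml ≤ n - 1 ∧ z ml = M := by
    have := hmlS; simp [hS, Finset.mem_filter, Finset.mem_Icc] at this; tauto
  have hfl : mf ≤ ml := S.min'_le _ hmlS
  have hmln : ml ≤ n - 2 := by
    rcases Nat.lt_or_ge ml (n-1) with h | h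
    · omega
    · exfalso; have : ml = n - 1 := by omega
      rw [this] at hml1; rw [hztop] at hml1; omega
  -- z (ml+1) ≤ M - 1
  have hzml1 : z (ml+1) ≤ M - 1 := by
    have hmem : ml + 1 ∉ S := fun h => by have := S.le_max' _ h; omega
    have hle : z (ml+1) ≤ M := hMub _ (by omega) (by omega)
    have : z (ml+1) ≠ M := fun h => hmem (by
      simp [hS, Finset.mem_filter, Finset.mem_Icc]; exact ⟨⟨by omega, by omega⟩, h⟩)
    omega
  -- z (ml - 1) ≤ M
  have hzmlm : z (ml-1) ≤ M := by
    rcases Nat.lt_or_ge (ml-1) i with h | h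
    · have : ml - 1 = i - 1 := by omega
      rw [this]; omega
    · exact hMub _ h (by omega)
  -- z (mf - 1) ≤ M - 1
  have hzmfm : z (mf-1) ≤ M - 1 := by
    rcases Nat.lt_or_ge (mf-1) i with h | h
    · have : mf - 1 = i - 1 := by omega
      rw [this]; exact hzi
    · have hmem : mf - 1 ∉ S := fun hc => by have := S.min'_le _ hc; omega
      have hle : z (mf-1) ≤ M := hMub _ h (by omega)
      have : z (mf-1) ≠ M := fun hc => hmem (by
        simp [hS, Finset.mem_filter, Finset.mem_Icc]; exact ⟨⟨h, by omega⟩, hc⟩)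
      omega
  have hbz : (0:ℤ) ≤ b := by positivity
  rcases Nat.lt_or_ge mf ml with hlt | hge
  · -- pair case
    refine ⟨mf+1, ml+1, by omega, by omega, by omega, Or.inl ⟨by omega, ?_, ?_⟩⟩
    · have h1 : dd (mf+1) = (b+1) * z mf - z (mf-1) - b * z (mf+1) := by
        have := hddz (mf+1) (by omega) (by omega)
        simpa using this
      have h2 : z (mf+1) ≤ M := hMub _ (by omega) (by omega)
      rw [h1, hmf1.2.2]
      nlinarith [mul_le_mul_of_nonneg_left h2 hbz]
    · have h1 : dd (ml+1) = (b+1) * z ml - z (ml-1) - b * z (ml+1) := by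
        have := hddz (ml+1) (by omega) (by omega)
        simpa using this
      rw [h1, hml1.2.2]
      nlinarith [mul_le_mul_of_nonneg_left hzml1 hbz]
  · -- single case
    have heq : mf = ml := by omega
    have hzmlm' : z (ml-1) ≤ M - 1 := by rw [← heq]; exact hzmfm
    refine ⟨ml+1, ml+1, by omega, le_refl _, by omega, Or.inr ⟨rfl, ?_⟩⟩
    have h1 : dd (ml+1) = (b+1) * z ml - z (ml-1) - b * z (ml+1) := by
      have := hddz (ml+1) (by omega) (by omega)
      simpa using this
    rw [h1, hml1.2.2]
    nlinarith [mul_le_mul_of_nonneg_left hzml1 hbz]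

/-- first descent: least `k` with `δ k ≤ -1` gives `dd k ≥ b`. -/
lemma firstDescent (b K n : ℕ) (hb : 1 ≤ b) (hKn : K ≤ n) (dd δ : ℕ → ℤ)
    (hrec : ∀ p, 1 ≤ p → p ≤ n → dd p = δ (p-1) - b * δ p)
    (hδ0 : δ 0 = 0)
    (hex : ∃ k, 1 ≤ k ∧ k ≤ K ∧ δ k ≤ -1) :
    ∃ j, 1 ≤ j ∧ j ≤ K ∧ (b:ℤ) ≤ dd j := by
  classical
  set S := (Finset.Icc 1 K).filter (fun k => δ k ≤ -1) with hS
  have hSne : S.Nonempty := by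
    obtain ⟨k, h1, h2, h3⟩ := hex
    exact ⟨k, by simp [hS, Finset.mem_filter, Finset.mem_Icc, h1, h2, h3]⟩
  set j := S.min' hSne with hj
  have hjS : j ∈ S := S.min'_mem hSne
  have hj1 : 1 ≤ j ∧ j ≤ K ∧ δ j ≤ -1 := by
    have := hjS; simp [hS, Finset.mem_filter, Finset.mem_Icc] at this; tauto
  have hprev : 0 ≤ δ (j-1) := by
    rcases Nat.eq_or_lt_of_le hj1.1 with h | h
    · rw [show j - 1 = 0 by omega, hδ0]
    · by_contra hc
      have hmem : j - 1 ∈ S := by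
        simp [hS, Finset.mem_filter, Finset.mem_Icc]
        exact ⟨⟨by omega, by omega⟩, by omega⟩
      have := S.min'_le _ hmem; omega
  refine ⟨j, hj1.1, hj1.2.1, ?_⟩
  have h1 := hrec j hj1.1 (by omega)
  have hbz : (0:ℤ) ≤ b := by positivity
  rw [h1]
  nlinarith [mul_le_mul_of_nonneg_left hj1.2.2 hbz]

/-- if no positive dd on the right, δ ≤ 0 on [i, n-1] (downward induction). -/
lemma rightFail (b n i : ℕ) (hb : 1 ≤ b) (hi : 1 ≤ i) (hin : i ≤ n - 1) (hn : 4 ≤ n)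
    (dd δ : ℕ → ℤ)
    (hrec : ∀ p, 1 ≤ p → p ≤ n → dd p = δ (p-1) - b * δ p)
    (hδn : ∀ k, n ≤ k → δ k = 0)
    (hnot : ∀ m, i + 1 ≤ m → m ≤ n → dd m ≤ 0) :
    ∀ k, i ≤ k → k ≤ n - 1 → δ k ≤ 0 := by
  have hbz : (0:ℤ) ≤ b := by positivity
  suffices h : ∀ t k, i ≤ k → k ≤ n - 1 → n - 1 - k ≤ t → δ k ≤ 0 by
    intro k h1 h2; exact h (n-1-k) k h1 h2 le_rfl
  intro t
  induction t with
  | zero =>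
    intro k h1 h2 h3
    have hk : k = n - 1 := by omega
    subst hk
    have h4 := hrec n (by omega) le_rfl
    have h5 := hnot n (by omega) le_rfl
    rw [hδn n le_rfl] at h4
    simp at h4
    omega
  | succ t ih =>
    intro k h1 h2 h3
    rcases Nat.eq_or_lt_of_le h2 with h | h
    · exact ih k h1 (by omega) (by omega)
    · have hk1 : k + 1 ≤ n - 1 := by omega
      have h4 := hrec (k+1) (by omega) (by omega)
      have h5 := hnot (k+1) (by omega) (by omega)
      have h6 : δ (k+1) ≤ 0 := ih (k+1) (by omega) hk1 (by omega)
      simp at h4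
      nlinarith [mul_le_mul_of_nonneg_left h6 hbz]



/-- downward propagation along the relation `δ q = b * δ (q+1)` on `[lo, hi)`. -/
lemma zoneProp (b : ℕ) (hb : 1 ≤ b) (δ : ℕ → ℤ) (lo hi : ℕ)
    (hrel : ∀ q, lo ≤ q → q < hi → δ q = b * δ (q+1)) :
    (δ hi ≤ 0 → ∀ q, lo ≤ q → q ≤ hi → δ q ≤ 0) ∧
    (1 ≤ δ hi → ∀ q, lo ≤ q → q ≤ hi → 1 ≤ δ q) ∧
    (δ hi = 0 → ∀ q, lo ≤ q → q ≤ hi → δ q = 0) := by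
  have hbz : (0:ℤ) ≤ b := by positivity
  have hb1 : (1:ℤ) ≤ b := by exact_mod_cast hb
  have key : ∀ t q, lo ≤ q → q ≤ hi → hi - q ≤ t →
      (δ hi ≤ 0 → δ q ≤ 0) ∧ (1 ≤ δ hi → 1 ≤ δ q) ∧ (δ hi = 0 → δ q = 0) := by
    intro t
    induction t with
    | zero =>
      intro q h1 h2 h3
      have : q = hi := by omega
      subst this; exact ⟨id, id, id⟩
    | succ t ih =>
      intro q h1 h2 h3
      rcases Nat.eq_or_lt_of_le h2 with h | h
      · subst h; exact ⟨id, id, id⟩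
      · have h4 := hrel q h1 h
        have h5 := ih (q+1) (by omega) (by omega) (by omega)
        refine ⟨fun hh => ?_, fun hh => ?_, fun hh => ?_⟩
        · have := h5.1 hh; rw [h4]; nlinarith
        · have := h5.2.1 hh; rw [h4]; nlinarith
        · have := h5.2.2 hh; rw [h4, this]; ring
  refine ⟨fun hh q h1 h2 => (key (hi-q) q h1 h2 le_rfl).1 hh,
          fun hh q h1 h2 => (key (hi-q) q h1 h2 le_rfl).2.1 hh,
          fun hh q h1 h2 => (key (hi-q) q h1 h2 le_rfl).2.2 hh⟩

/-- left-side producer (case 4). -/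
lemma leftLemma (b n ps : ℕ) (hb : 1 ≤ b) (hps3 : 3 ≤ ps) (hpsn : ps ≤ n)
    (dd δ z : ℕ → ℤ)
    (hrec : ∀ p, 1 ≤ p → p ≤ n → dd p = δ (p-1) - b * δ p)
    (hδ0 : δ 0 = 0)
    (hz : ∀ k, z k = ∑ q ∈ Finset.Ioc 0 k, δ q)
    (hzps : 0 ≤ z (ps-1))
    (hδps : δ (ps-1) ≤ -1) :
    ∃ p l, 2 ≤ p ∧ p ≤ l ∧ l ≤ ps - 1 ∧
      (p < l ∧ 1 ≤ dd p ∧ (b:ℤ) ≤ dd l ∨ p = l ∧ (b:ℤ)+1 ≤ dd l) := by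
  classical
  have hbz : (0:ℤ) ≤ b := by positivity
  set G := (Finset.Icc 0 (ps-2)).filter (fun k => 0 ≤ δ k) with hG
  have hGne : G.Nonempty :=
    ⟨0, by simp [hG, Finset.mem_filter, Finset.mem_Icc, hδ0]⟩
  set lst := G.max' hGne with hlst
  have hlstG : lst ∈ G := G.max'_mem hGne
  have hlst1 : lst ≤ ps - 2 ∧ 0 ≤ δ lst := by
    have := hlstG; simp [hG, Finset.mem_filter, Finset.mem_Icc] at this; tauto
  have hneg : ∀ k, lst + 1 ≤ k → k ≤ ps - 1 → δ k ≤ -1 := by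
    intro k h1 h2
    rcases Nat.eq_or_lt_of_le h2 with h | h
    · subst h; exact hδps
    · by_contra hc
      have hmem : k ∈ G := by
        simp [hG, Finset.mem_filter, Finset.mem_Icc]; omega
      have := G.le_max' _ hmem; omega
  -- z lst ≥ 1
  have hsplit : z lst + ∑ q ∈ Finset.Ioc lst (ps-1), δ q = z (ps-1) := by
    rw [hz, hz]
    exact Finset.sum_Ioc_consecutive _ (by omega) (by omega)
  have hsum_le : ∑ q ∈ Finset.Ioc lst (ps-1), δ q ≤ -1 := by
    calc ∑ q ∈ Finset.Ioc lst (ps-1), δ q ≤ ∑ _q ∈ Finset.Ioc lst (ps-1), (-1:ℤ) := by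
          apply Finset.sum_le_sum
          intro q hq
          rw [Finset.mem_Ioc] at hq
          exact hneg q (by omega) hq.2
      _ = -((ps-1-lst : ℕ) : ℤ) := by
          rw [Finset.sum_const, Nat.card_Ioc]; simp
      _ ≤ -1 := by
          have : (1:ℤ) ≤ ((ps-1-lst : ℕ) : ℤ) := by exact_mod_cast Nat.one_le_iff_ne_zero.mpr (by omega)
          omega
  have hzlst : 1 ≤ z lst := by omega
  have hlstpos : 1 ≤ lst := by
    by_contra hc
    have : lst = 0 := by omega
    rw [this, hz] at hzlst; simp at hzlst
  set l := lst + 1 with hl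
  have hll : l ≤ ps - 1 := by omega
  have hδl : δ l ≤ -1 := hneg l le_rfl hll
  have hddl : (b:ℤ) ≤ dd l := by
    have h1 := hrec l (by omega) (by omega)
    rw [h1, show l - 1 = lst by omega]
    nlinarith [mul_le_mul_of_nonneg_left hδl hbz]
  by_cases hp : ∃ p, 2 ≤ p ∧ p ≤ l - 1 ∧ 1 ≤ dd p
  · obtain ⟨p, hp1, hp2, hp3⟩ := hp
    exact ⟨p, l, hp1, by omega, hll, Or.inl ⟨by omega, hp3, hddl⟩⟩
  · push_neg at hp
    have hall : ∀ p, 2 ≤ p → p ≤ l - 1 → dd p ≤ 0 := by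
      intro p h1 h2; have := hp p h1 h2; omega
    -- claim δ lst ≥ 1
    have hδlst1 : 1 ≤ δ lst := by
      by_contra hc
      have hlst0 : δ lst ≤ 0 := by omega
      -- downward chain: δ k ≤ 0 for 1 ≤ k ≤ lst
      have hchain : ∀ t k, 1 ≤ k → k ≤ lst → lst - k ≤ t → δ k ≤ 0 := by
        intro t
        induction t with
        | zero =>
          intro k h1 h2 h3
          have hk : k = lst := by omega
          exact hk.symm ▸ hlst0
        | succ t ih =>
          intro k h1 h2 h3
          rcases Nat.eq_or_lt_of_le h2 with h | h
          · exact h.symm ▸ hlst0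
          · have h4 := hrec (k+1) (by omega) (by omega)
            have h5 := hall (k+1) (by omega) (by omega)
            have h6 : δ (k+1) ≤ 0 := ih (k+1) (by omega) (by omega) (by omega)
            simp at h4
            nlinarith [mul_le_mul_of_nonneg_left h6 hbz]
      have : z lst ≤ 0 := by
        rw [hz]
        apply Finset.sum_nonpos
        intro q hq
        rw [Finset.mem_Ioc] at hq
        exact hchain (lst - q) q (by omega) hq.2 le_rfl
      omega
    have : (b:ℤ) + 1 ≤ dd l := by
      have h1 := hrec l (by omega) (by omega)
      rw [h1, show l - 1 = lst by omega]
      nlinarith [mul_le_mul_of_nonneg_left hδl hbz]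
    exact ⟨l, l, by omega, le_rfl, hll, Or.inr ⟨rfl, this⟩⟩


def Goal (b n i : ℕ) (u : ℕ → ℤ) : Prop :=
  ∃ j l : ℕ, 1 ≤ j ∧ j < l ∧ l ≤ n - 1 ∧
    ((¬ (j + 1 ≤ i ∧ i ≤ l)) ∧
      (j + 1 < l ∧ 1 ≤ u (j+1) ∧ (b:ℤ) ≤ u l ∨ j + 1 = l ∧ (b:ℤ) + 1 ≤ u l)
     ∨ (j + 1 ≤ i ∧ i ≤ l) ∧ (b:ℤ) ≤ u j ∧ 1 ≤ u (l+1))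

lemma finishMain (b n i : ℕ) (u dd : ℕ → ℤ) (hud : ∀ p, 1 ≤ p → p ≤ n → dd p ≤ u p)
    (p l : ℕ) (h2p : 2 ≤ p) (hpl : p ≤ l) (hln : l ≤ n - 1) (hn : 4 ≤ n)
    (hside : l < i ∨ i < p)
    (hd : p < l ∧ 1 ≤ dd p ∧ (b:ℤ) ≤ dd l ∨ p = l ∧ (b:ℤ)+1 ≤ dd l) :
    Goal b n i u := by
  refine ⟨p-1, l, by omega, by omega, hln, Or.inl ⟨by omega, ?_⟩⟩
  rcases hd with ⟨h1, h2, h3⟩ | ⟨h1, h2⟩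
  · left
    refine ⟨by omega, ?_, le_trans h3 (hud l (by omega) (by omega))⟩
    rw [show p - 1 + 1 = p by omega]
    exact le_trans h2 (hud p (by omega) (by omega))
  · right
    exact ⟨by omega, le_trans h2 (hud l (by omega) (by omega))⟩

lemma finishR3 (b n i : ℕ) (u dd : ℕ → ℤ) (hud : ∀ p, 1 ≤ p → p ≤ n → dd p ≤ u p)
    (j m : ℕ) (hj : 1 ≤ j) (hji : j + 1 ≤ i) (hmi : i + 1 ≤ m) (hmn : m ≤ n)
    (hbj : (b:ℤ) ≤ dd j) (h1m : 1 ≤ dd m) : Goal b n i u := by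
  refine ⟨j, m - 1, hj, by omega, by omega, Or.inr ⟨⟨hji, by omega⟩,
    le_trans hbj (hud j hj (by omega)), ?_⟩⟩
  rw [show m - 1 + 1 = m by omega]
  exact le_trans h1m (hud m (by omega) hmn)

lemma caseFour (b n i ps : ℕ) (hb : 1 ≤ b) (hn : 4 ≤ n) (hpsi : ps ≤ i) (hi2 : i ≤ n)
    (hps1 : 1 ≤ ps)
    (dd δ z u : ℕ → ℤ)
    (hrec : ∀ p, 1 ≤ p → p ≤ n → dd p = δ (p-1) - b * δ p)
    (hδ0 : δ 0 = 0)
    (hz : ∀ k, z k = ∑ q ∈ Finset.Ioc 0 k, δ q)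
    (hud : ∀ p, 1 ≤ p → p ≤ n → dd p ≤ u p)
    (hrelA : ∀ q, ps ≤ q → q < i → δ q = b * δ (q+1))
    (hneg : dd ps ≤ -1)
    (hδi : δ i ≤ 0) (hzi : 0 ≤ z (i-1)) : Goal b n i u := by
  have hbz : (0:ℤ) ≤ b := by positivity
  have hb1 : (1:ℤ) ≤ b := by exact_mod_cast hb
  have hnegzone : ∀ q, ps ≤ q → q ≤ i → δ q ≤ 0 :=
    (zoneProp b hb δ ps i hrelA).1 hδi
  have hzps1 : 0 ≤ z (ps-1) := by
    have hsplit : z (ps-1) + ∑ q ∈ Finset.Ioc (ps-1) (i-1), δ q = z (i-1) := by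
      rw [hz, hz]; exact Finset.sum_Ioc_consecutive _ (by omega) (by omega)
    have hle : ∑ q ∈ Finset.Ioc (ps-1) (i-1), δ q ≤ 0 := by
      apply Finset.sum_nonpos
      intro q hq
      rw [Finset.mem_Ioc] at hq
      exact hnegzone q (by omega) (by omega)
    omega
  have hδpsm1 : δ (ps-1) ≤ -1 := by
    have h1 := hrec ps hps1 (by omega)
    have h2 : δ ps ≤ 0 := hnegzone ps le_rfl hpsi
    nlinarith [mul_le_mul_of_nonneg_left h2 hbz]
  have hps3 : 3 ≤ ps := by
    rcases Nat.lt_or_ge ps 3 with h | h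
    · exfalso
      interval_cases ps
      · have h1 := hrec 1 le_rfl (by omega)
        rw [hδ0] at h1
        have h2 : δ 1 ≤ 0 := hnegzone 1 le_rfl (by omega)
        simp at h1
        nlinarith [mul_le_mul_of_nonneg_left h2 hbz]
      · have h1 : z 1 = δ 1 := by
          rw [hz]
          have he : Finset.Ioc 0 1 = {1} := by decide
          rw [he, Finset.sum_singleton]
      -- ps = 2 : z (ps-1) = z 1 = δ 1 = δ (ps-1) ≤ -1, contradiction
        simp only [show (2:ℕ) - 1 = 1 from rfl] at hzps1 hδpsm1
        omega
    · exact h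
  obtain ⟨p, l, h2p, hpl, hlps, hd⟩ :=
    leftLemma b n ps hb hps3 (by omega) dd δ z hrec hδ0 hz hzps1 hδpsm1
  exact finishMain b n i u dd hud p l h2p hpl (by omega) hn (Or.inl (by omega)) hd

theorem keyLemma (b n i : ℕ) (hb : 1 ≤ b) (hn : 4 ≤ n) (hi1 : 1 ≤ i) (hi2 : i ≤ n)
    (dd δ u : ℕ → ℤ)
    (hδn : ∀ k, n ≤ k → δ k = 0)
    (hδ0 : δ 0 = 0)
    (hrec : ∀ p, 1 ≤ p → p ≤ n → dd p = δ (p-1) - b * δ p)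
    (hsum : ∑ q ∈ Finset.Ioc 0 (n-1), δ q = 0)
    (hud : ∀ p, 1 ≤ p → p ≤ n → dd p ≤ u p)
    (ps : ℕ) (hps1 : 1 ≤ ps) (hpsn : ps ≤ n) (hneg : dd ps ≤ -1)
    (hz0 : ∀ q, 1 ≤ q → q ≤ n → rk n i q < rk n i ps → dd q = 0) :
    Goal b n i u := by
  classical
  have hbz : (0:ℤ) ≤ b := by positivity
  have hb1 : (1:ℤ) ≤ b := by exact_mod_cast hb
  set z : ℕ → ℤ := fun k => ∑ q ∈ Finset.Ioc 0 k, δ q with hzdef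
  have hz : ∀ k, z k = ∑ q ∈ Finset.Ioc 0 k, δ q := fun k => rfl
  have hz00 : z 0 = 0 := by simp [hz]
  have hzstep : ∀ k, z (k+1) = z k + δ (k+1) := by
    intro k
    rw [hz, hz, Finset.sum_Ioc_succ_top (by omega)]
  have hztop : z (n-1) = 0 := hsum
  have hddz : ∀ p, 2 ≤ p → p ≤ n → dd p = (b+1) * z (p-1) - z (p-2) - b * z p := by
    intro p h2 hpn
    have e1 := hzstep (p-2)
    rw [show p-2+1 = p-1 by omega] at e1
    have e2 := hzstep (p-1)
    rw [show p-1+1 = p by omega] at e2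
    have d1 : δ (p-1) = z (p-1) - z (p-2) := by linarith
    have d2 : δ p = z p - z (p-1) := by linarith
    rw [hrec p (by omega) hpn, d1, d2]; ring
  rcases Nat.lt_or_ge i ps with hcase | hcase
  · -- CASE B : i < ps
    have hzl : ∀ q, 1 ≤ q → q ≤ i → dd q = 0 := fun q h1 h2 =>
      hz0 q h1 (by omega) (rk_lt_li h2 hcase hpsn h1)
    have hzr : ∀ q, ps < q → q ≤ n → dd q = 0 := fun q h1 h2 =>
      hz0 q (by omega) h2 (rk_lt_right (by omega) (by omega) h1 h2)
    have hup : ∀ q, q ≤ i → δ q = 0 := by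
      intro q
      induction q with
      | zero => intro _; exact hδ0
      | succ q ih =>
        intro h
        have h1 := hrec (q+1) (by omega) (by omega)
        have h2 := hzl (q+1) (by omega) h
        have h3 := ih (by omega)
        rw [h2, show q+1-1 = q from rfl, h3] at h1
        have : (b:ℤ) * δ (q+1) = 0 := by linarith
        rcases mul_eq_zero.mp this with hc | hc
        · exfalso; rw [hc] at hb1; norm_num at hb1
        · exact hc
    have hrel : ∀ q, ps ≤ q → q < n → δ q = b * δ (q+1) := by
      intro q h1 h2
      have h3 := hrec (q+1) (by omega) (by omega)
      have h4 := hzr (q+1) (by omega) (by omega)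
      rw [h4, show q+1-1 = q from rfl] at h3
      linarith
    have hdown : ∀ q, ps ≤ q → q ≤ n → δ q = 0 :=
      (zoneProp b hb δ ps n hrel).2.2 (hδn n le_rfl)
    have hδps : δ ps = 0 := hdown ps le_rfl hpsn
    have hδpsm1 : δ (ps-1) ≤ -1 := by
      have h1 := hrec ps hps1 hpsn
      rw [hδps] at h1
      simp at h1
      omega
    have hps2 : i + 2 ≤ ps := by
      by_contra hc
      have : ps = i + 1 := by omega
      rw [this, show i+1-1 = i from rfl] at hδpsm1
      rw [hup i le_rfl] at hδpsm1
      omega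
    have hzi1 : z (i-1) = 0 := by
      rw [hz]
      apply Finset.sum_eq_zero
      intro q hq
      rw [Finset.mem_Ioc] at hq
      exact hup q (by omega)
    have hzpsm1 : z (ps-1) = 0 := by
      have hsplit : z (ps-1) + ∑ q ∈ Finset.Ioc (ps-1) (n-1), δ q = z (n-1) := by
        rw [hz, hz]; exact Finset.sum_Ioc_consecutive _ (by omega) (by omega)
      have : ∑ q ∈ Finset.Ioc (ps-1) (n-1), δ q = 0 := by
        apply Finset.sum_eq_zero
        intro q hq
        rw [Finset.mem_Ioc] at hq
        exact hdown q (by omega) (by omega)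
      omega
    have hzpsm2 : 1 ≤ z (ps-2) := by
      have := hzstep (ps-2)
      rw [show ps-2+1 = ps-1 by omega] at this
      omega
    obtain ⟨k0, hk0mem, hk0max⟩ := Finset.exists_max_image (Finset.Icc i (n-1)) z
      (by rw [Finset.nonempty_Icc]; omega)
    set M := z k0 with hM
    rw [Finset.mem_Icc] at hk0mem
    have hMub : ∀ k, i ≤ k → k ≤ n-1 → z k ≤ M := by
      intro k h1 h2
      exact hk0max k (Finset.mem_Icc.mpr ⟨h1, h2⟩)
    have hMmem : ∃ k, i ≤ k ∧ k ≤ n-1 ∧ z k = M := ⟨k0, hk0mem.1, hk0mem.2, rfl⟩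
    have hM1 : 1 ≤ M := le_trans hzpsm2 (hMub (ps-2) (by omega) (by omega))
    obtain ⟨p, l, hp1, hp2, hp3, hp4⟩ :=
      rightLemma b n i hb (by omega) hn hi1 dd z hddz hztop M hMmem hMub hM1
        (by rw [hzi1]; omega)
    exact finishMain b n i u dd hud p l (by omega) hp2 hp3 hn (Or.inr (by omega)) hp4
  · -- CASE A : ps ≤ i
    have hzone : ∀ q, ps + 1 ≤ q → q ≤ i → dd q = 0 := fun q h1 h2 =>
      hz0 q (by omega) (by omega) (rk_lt_left h2 (by omega) (by omega))
    have hrelA : ∀ q, ps ≤ q → q < i → δ q = b * δ (q+1) := by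
      intro q h1 h2
      have h3 := hrec (q+1) (by omega) (by omega)
      have h4 := hzone (q+1) (by omega) (by omega)
      rw [h4, show q+1-1 = q from rfl] at h3
      linarith
    rcases le_or_gt i (n-1) with hin1 | hie
    · -- i ≤ n - 1
      obtain ⟨k0, hk0mem, hk0max⟩ := Finset.exists_max_image (Finset.Icc i (n-1)) z
        (by rw [Finset.nonempty_Icc]; omega)
      set M := z k0 with hM
      rw [Finset.mem_Icc] at hk0mem
      have hMub : ∀ k, i ≤ k → k ≤ n-1 → z k ≤ M := by
        intro k h1 h2
        exact hk0max k (Finset.mem_Icc.mpr ⟨h1, h2⟩)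
      have hMmem : ∃ k, i ≤ k ∧ k ≤ n-1 ∧ z k = M := ⟨k0, hk0mem.1, hk0mem.2, rfl⟩
      by_cases hhigh : 1 ≤ M ∧ z (i-1) ≤ M - 1
      · obtain ⟨p, l, hp1, hp2, hp3, hp4⟩ :=
          rightLemma b n i hb hin1 hn hi1 dd z hddz hztop M hMmem hMub hhigh.1 hhigh.2
        exact finishMain b n i u dd hud p l (by omega) hp2 hp3 hn (Or.inr (by omega)) hp4
      · have hnothigh : M ≤ 0 ∨ z (i-1) ≥ M := by
          by_cases h1 : 1 ≤ M
          · right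
            have := fun h2 => hhigh ⟨h1, h2⟩
            omega
          · left; omega
        have hzistep : z i = z (i-1) + δ i := by
          have := hzstep (i-1)
          rw [show i-1+1 = i by omega] at this
          exact this
        rcases le_or_gt 1 (δ i) with hδi1 | hδi0'
        · -- CASE 2 : δ i ≥ 1
          have hziM : z i ≤ M := hMub i le_rfl hin1
          have hzii : z i ≤ 0 ∧ z (i-1) ≤ -1 := by
            rcases hnothigh with h | h
            · constructor <;> omega
            · omega
          have hpos : ∀ q, ps ≤ q → q ≤ i → 1 ≤ δ q :=
            (zoneProp b hb δ ps i hrelA).2.1 hδi1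
          have hzpsm1 : z (ps-1) ≤ -1 := by
            have hsplit : z (ps-1) + ∑ q ∈ Finset.Ioc (ps-1) i, δ q = z i := by
              rw [hz, hz]; exact Finset.sum_Ioc_consecutive _ (by omega) (by omega)
            have hge : ((i - (ps-1) : ℕ) : ℤ) ≤ ∑ q ∈ Finset.Ioc (ps-1) i, δ q := by
              calc ((i - (ps-1) : ℕ) : ℤ) = ∑ _q ∈ Finset.Ioc (ps-1) i, (1:ℤ) := by
                    rw [Finset.sum_const, Nat.card_Ioc]; simp
                _ ≤ ∑ q ∈ Finset.Ioc (ps-1) i, δ q := by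
                    apply Finset.sum_le_sum
                    intro q hq
                    rw [Finset.mem_Ioc] at hq
                    exact hpos q (by omega) hq.2
            have : (1:ℤ) ≤ ((i - (ps-1) : ℕ) : ℤ) := by
              exact_mod_cast Nat.one_le_iff_ne_zero.mpr (by omega)
            omega
          have hps2 : 2 ≤ ps := by
            by_contra hc
            have : ps = 1 := by omega
            rw [this] at hzpsm1
            simp at hzpsm1
            rw [hz00] at hzpsm1
            omega
          have hex : ∃ k, 1 ≤ k ∧ k ≤ ps - 1 ∧ δ k ≤ -1 := by
            by_contra hc
            push_neg at hc
            have : 0 ≤ z (ps-1) := by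
              rw [hz]
              apply Finset.sum_nonneg
              intro q hq
              rw [Finset.mem_Ioc] at hq
              have := hc q (by omega) (by omega)
              omega
            omega
          obtain ⟨j, hj1, hj2, hj3⟩ :=
            firstDescent b (ps-1) n hb (by omega) dd δ hrec hδ0 hex
          have hm : ∃ m, i + 1 ≤ m ∧ m ≤ n ∧ 1 ≤ dd m := by
            by_contra hc
            push_neg at hc
            have hnot : ∀ m, i + 1 ≤ m → m ≤ n → dd m ≤ 0 := by
              intro m h1 h2
              have := hc m h1 h2
              omega
            have := rightFail b n i hb hi1 hin1 hn dd δ hrec hδn hnot i le_rfl hin1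
            omega
          obtain ⟨m, hm1, hm2, hm3⟩ := hm
          exact finishR3 b n i u dd hud j m hj1 (by omega) hm1 hm2 hj3 hm3
        · -- δ i ≤ 0
          have hδi0 : δ i ≤ 0 := by omega
          rcases le_or_gt 0 (z (i-1)) with hz4 | hz3
          · exact caseFour b n i ps hb hn hcase hi2 hps1 dd δ z u hrec hδ0 hz hud hrelA
              hneg hδi0 hz4
          · -- CASE 3 : z (i-1) ≤ -1
            have hi2' : 2 ≤ i := by
              by_contra hc
              have : i = 1 := by omega
              rw [this] at hz3
              simp at hz3
              rw [hz00] at hz3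
              omega
            have hex : ∃ k, 1 ≤ k ∧ k ≤ i - 1 ∧ δ k ≤ -1 := by
              by_contra hc
              push_neg at hc
              have : 0 ≤ z (i-1) := by
                rw [hz]
                apply Finset.sum_nonneg
                intro q hq
                rw [Finset.mem_Ioc] at hq
                have := hc q (by omega) (by omega)
                omega
              omega
            obtain ⟨j, hj1, hj2, hj3⟩ :=
              firstDescent b (i-1) n hb (by omega) dd δ hrec hδ0 hex
            have hm : ∃ m, i + 1 ≤ m ∧ m ≤ n ∧ 1 ≤ dd m := by
              by_contra hc
              push_neg at hc
              have hnot : ∀ m, i + 1 ≤ m → m ≤ n → dd m ≤ 0 := by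
                intro m h1 h2
                have := hc m h1 h2
                omega
              have hdn := rightFail b n i hb hi1 hin1 hn dd δ hrec hδn hnot
              have hsplit : z (i-1) + ∑ q ∈ Finset.Ioc (i-1) (n-1), δ q = z (n-1) := by
                rw [hz, hz]; exact Finset.sum_Ioc_consecutive _ (by omega) (by omega)
              have : ∑ q ∈ Finset.Ioc (i-1) (n-1), δ q ≤ 0 := by
                apply Finset.sum_nonpos
                intro q hq
                rw [Finset.mem_Ioc] at hq
                exact hdn q (by omega) hq.2
              omega
            obtain ⟨m, hm1, hm2, hm3⟩ := hm
            exact finishR3 b n i u dd hud j m hj1 (by omega) hm1 hm2 hj3 hm3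
    · -- i = n
      have hieq : i = n := by omega
      have hδi0 : δ i ≤ 0 := by rw [hieq, hδn n le_rfl]
      have hz4 : 0 ≤ z (i-1) := by rw [hieq, hztop]
      exact caseFour b n i ps hb hn hcase hi2 hps1 dd δ z u hrec hδ0 hz hud hrelA
        hneg hδi0 hz4



def gfun (b j l p : ℕ) : ℤ :=
  (if p = j+1 then 1 else 0) + b * (if p = l then 1 else 0)
  - b * (if p = j then 1 else 0) - (if p = l+1 then 1 else 0)

def tval (j l k : ℕ) : ℤ := (if k = j then 1 else 0) - (if k = l then 1 else 0)

lemma gfun_tval (b j l : ℕ) (hj : 1 ≤ j) (hjl : j < l) (k : ℕ) :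
    gfun b j l (k+1) + b * tval j l (k+1) = tval j l k := by
  unfold gfun tval
  split_ifs <;> simp_all <;> omega

def Ee (b n : ℕ) (x : ℕ → ℤ) : ℕ → ℤ
  | 0 => 0
  | (t+1) => x (n - t) + b * Ee b n x t

lemma Ee_succ (b n : ℕ) (x : ℕ → ℤ) (t : ℕ) :
    Ee b n x (t+1) = x (n - t) + b * Ee b n x t := rfl

lemma Ee_add (b n : ℕ) (x y : ℕ → ℤ) (t : ℕ) :
    Ee b n (fun p => x p + y p) t = Ee b n x t + Ee b n y t := by
  induction t with
  | zero => simp [Ee]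
  | succ t ih => simp only [Ee_succ, ih]; ring

lemma Ee_smul (b n : ℕ) (c : ℤ) (x : ℕ → ℤ) (t : ℕ) :
    Ee b n (fun p => c * x p) t = c * Ee b n x t := by
  induction t with
  | zero => simp [Ee]
  | succ t ih => simp only [Ee_succ, ih]; ring

lemma Ee_zero (b n : ℕ) (t : ℕ) : Ee b n (fun _ => 0) t = 0 := by
  induction t with
  | zero => simp [Ee]
  | succ t ih => simp [Ee_succ, ih]

def pad (n : ℕ) (d : Fin n → ℤ) : ℕ → ℤ :=
  fun p => if h : 1 ≤ p ∧ p ≤ n then d ⟨p-1, by omega⟩ else 0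

lemma pad_add (n : ℕ) (d e : Fin n → ℤ) :
    pad n (d + e) = fun p => pad n d p + pad n e p := by
  funext p; unfold pad; split_ifs <;> simp

lemma pad_smul (n : ℕ) (c : ℤ) (d : Fin n → ℤ) :
    pad n (c • d) = fun p => c * pad n d p := by
  funext p; unfold pad; split_ifs <;> simp

lemma pad_zero (n : ℕ) : pad n (0 : Fin n → ℤ) = fun _ => 0 := by
  funext p; unfold pad; split_ifs <;> simp

def gv (b n j l : ℕ) : Fin n → ℤ := fun m => gfun b j l ((m : ℕ) + 1)

lemma pad_gv (b n j l : ℕ) (hj : 1 ≤ j) (hjl : j < l) (hl : l ≤ n - 1) (hn : 1 ≤ n) :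
    pad n (gv b n j l) = gfun b j l := by
  funext p
  unfold pad gv
  split_ifs with h
  · rw [show p - 1 + 1 = p by omega]
  · symm
    unfold gfun
    split_ifs <;> omega

lemma Ee_gv (b n j l : ℕ) (hj : 1 ≤ j) (hjl : j < l) (hl : l ≤ n - 1) (hn : 1 ≤ n) :
    ∀ t, t ≤ n → Ee b n (pad n (gv b n j l)) t = tval j l (n - t) := by
  rw [pad_gv b n j l hj hjl hl hn]
  intro t
  induction t with
  | zero =>
    intro _
    unfold Ee tval
    have h1 : n - 0 = n := rfl
    rw [h1]
    rw [if_neg (by omega), if_neg (by omega)]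
    ring
  | succ t ih =>
    intro ht
    rw [Ee_succ, ih (by omega)]
    have h2 : n - t = (n - (t+1)) + 1 := by omega
    rw [h2]
    exact gfun_tval b j l hj hjl (n - (t+1))

def genSet (b n : ℕ) : Set (Fin n → ℤ) :=
  {x | ∃ j l : ℕ, 1 ≤ j ∧ j < l ∧ l ≤ n - 1 ∧ x = gv b n j l}

lemma span_facts (b n : ℕ) (hn : 1 ≤ n) (d : Fin n → ℤ)
    (hd : d ∈ Submodule.span ℤ (genSet b n)) :
    Ee b n (pad n d) n = 0 ∧ ∑ q ∈ Finset.Ioc 0 (n-1), Ee b n (pad n d) (n - q) = 0 := by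
  induction hd using Submodule.span_induction with
  | mem x hx =>
    obtain ⟨j, l, hj, hjl, hl, rfl⟩ := hx
    constructor
    · rw [Ee_gv b n j l hj hjl hl hn n le_rfl]
      unfold tval
      rw [if_neg (by omega), if_neg (by omega)]
      ring
    · have he : ∀ q ∈ Finset.Ioc 0 (n-1), Ee b n (pad n (gv b n j l)) (n - q) = tval j l q := by
        intro q hq
        rw [Finset.mem_Ioc] at hq
        rw [Ee_gv b n j l hj hjl hl hn (n-q) (by omega)]
        rw [show n - (n - q) = q by omega]
      rw [Finset.sum_congr rfl he]
      unfold tval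
      rw [Finset.sum_sub_distrib]
      rw [Finset.sum_ite_eq' (Finset.Ioc 0 (n-1)) j (fun _ => (1:ℤ))]
      rw [Finset.sum_ite_eq' (Finset.Ioc 0 (n-1)) l (fun _ => (1:ℤ))]
      rw [if_pos (by rw [Finset.mem_Ioc]; omega), if_pos (by rw [Finset.mem_Ioc]; omega)]
      ring
  | zero =>
    rw [pad_zero]
    constructor
    · exact Ee_zero b n n
    · exact Finset.sum_eq_zero fun q _ => Ee_zero b n (n - q)
  | add x y hx hy ihx ihy =>
    rw [pad_add, Ee_add]
    constructor
    · rw [ihx.1, ihy.1]; ring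
    · have : ∀ q ∈ Finset.Ioc 0 (n-1), Ee b n (fun p => pad n x p + pad n y p) (n - q)
          = Ee b n (pad n x) (n - q) + Ee b n (pad n y) (n - q) := by
        intro q _; rw [Ee_add]
      rw [Finset.sum_congr rfl this, Finset.sum_add_distrib, ihx.2, ihy.2]
      ring
  | smul c x hx ihx =>
    rw [pad_smul, Ee_smul]
    constructor
    · rw [ihx.1]; ring
    · have : ∀ q ∈ Finset.Ioc 0 (n-1), Ee b n (fun p => c * pad n x p) (n - q)
          = c * Ee b n (pad n x) (n - q) := by
        intro q _; rw [Ee_smul]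
      rw [Finset.sum_congr rfl this, ← Finset.mul_sum, ihx.2]
      ring

lemma delta_facts (b n : ℕ) (hn : 1 ≤ n) (d : Fin n → ℤ)
    (hd : d ∈ Submodule.span ℤ (genSet b n)) :
    (Ee b n (pad n d) (n - 0) = 0) ∧ (∀ k, n ≤ k → Ee b n (pad n d) (n - k) = 0) ∧
    (∀ p, 1 ≤ p → p ≤ n →
      pad n d p = Ee b n (pad n d) (n - (p-1)) - b * Ee b n (pad n d) (n - p)) ∧
    (∑ q ∈ Finset.Ioc 0 (n-1), Ee b n (pad n d) (n - q) = 0) := by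
  obtain ⟨h1, h2⟩ := span_facts b n hn d hd
  refine ⟨by rw [Nat.sub_zero]; exact h1, ?_, ?_, h2⟩
  · intro k hk
    rw [show n - k = 0 by omega]
    rfl
  · intro p hp1 hp2
    rw [show n - (p-1) = (n-p)+1 by omega, Ee_succ, show n - (n-p) = p by omega]
    ring




noncomputable def W1e (n b : ℕ) (x y : Fin n) : Fin n →₀ ℕ := Finsupp.single x 1 + Finsupp.single y b
noncomputable def W2e (n b : ℕ) (x y : Fin n) : Fin n →₀ ℕ := Finsupp.single x b + Finsupp.single y 1

section
variable (K : Type*) [Field K] (b n : ℕ)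

lemma minor_eq (j l : ℕ) (hj : 1 ≤ j) (hjl : j < l) (hl : l ≤ n - 1) (hn : 4 ≤ n)
    (x1 y1 x2 y2 : Fin n) (h1 : (x1:ℕ) = j) (h2 : (y1:ℕ) = l - 1)
    (h3 : (x2:ℕ) = j - 1) (h4 : (y2:ℕ) = l) :
    xv K n (j+1) * xv K n l ^ b - xv K n j ^ b * xv K n (l+1)
      = MvPolynomial.monomial (W1e n b x1 y1) (1:K)
        - MvPolynomial.monomial (W2e n b x2 y2) (1:K) := by
  have e1 : xv K n (j+1) = MvPolynomial.X x1 := by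
    unfold xv
    rw [dif_pos (by omega)]
    congr 1
    exact Fin.ext (by simp only [Fin.val_mk]; omega)
  have e2 : xv K n l = MvPolynomial.X y1 := by
    unfold xv
    rw [dif_pos (by omega)]
    congr 1
    exact Fin.ext (by simp only [Fin.val_mk]; omega)
  have e3 : xv K n j = MvPolynomial.X x2 := by
    unfold xv
    rw [dif_pos (by omega)]
    congr 1
    exact Fin.ext (by simp only [Fin.val_mk]; omega)
  have e4 : xv K n (l+1) = MvPolynomial.X y2 := by
    unfold xv
    rw [dif_pos (by omega)]
    congr 1
    exact Fin.ext (by simp only [Fin.val_mk]; omega)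
  rw [e1, e2, e3, e4]
  rw [MvPolynomial.X_pow_eq_monomial, MvPolynomial.X_pow_eq_monomial]
  rw [← pow_one (MvPolynomial.X x1 : MvPolynomial (Fin n) K),
    ← pow_one (MvPolynomial.X y2 : MvPolynomial (Fin n) K),
    MvPolynomial.X_pow_eq_monomial, MvPolynomial.X_pow_eq_monomial,
    MvPolynomial.monomial_mul, MvPolynomial.monomial_mul]
  unfold W1e W2e
  norm_num

lemma W1e_ne_W2e (j l : ℕ) (hj : 1 ≤ j) (hjl : j < l) (hl : l ≤ n - 1) (hb : 1 ≤ b)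
    (x1 y1 x2 y2 : Fin n) (h1 : (x1:ℕ) = j) (h2 : (y1:ℕ) = l - 1)
    (h3 : (x2:ℕ) = j - 1) (h4 : (y2:ℕ) = l) :
    W1e n b x1 y1 ≠ W2e n b x2 y2 := by
  intro hc
  have := DFunLike.congr_fun hc x2
  unfold W1e W2e at this
  rw [Finsupp.add_apply, Finsupp.add_apply, Finsupp.single_apply, Finsupp.single_apply,
    Finsupp.single_apply, Finsupp.single_apply] at this
  rw [if_neg (fun h => by rw [Fin.ext_iff] at h; omega),
    if_neg (fun h => by rw [Fin.ext_iff] at h; omega),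
    if_pos rfl,
    if_neg (fun h => by rw [Fin.ext_iff] at h; omega)] at this
  omega

lemma support_binomial {w1 w2 : Fin n →₀ ℕ} (hne : w1 ≠ w2) :
    (MvPolynomial.monomial w1 (1:K) - MvPolynomial.monomial w2 (1:K)).support = {w1, w2} := by
  ext w
  rw [MvPolynomial.mem_support_iff]
  rw [MvPolynomial.coeff_sub, MvPolynomial.coeff_monomial, MvPolynomial.coeff_monomial]
  simp only [Finset.mem_insert, Finset.mem_singleton]
  constructor
  · intro h
    by_contra hc
    push_neg at hc
    rw [if_neg (fun he => hc.1 he.symm), if_neg (fun he => hc.2 he.symm)] at h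
    simp at h
  · intro h
    rcases h with rfl | rfl
    · rw [if_pos rfl, if_neg (fun he => hne he.symm)]
      norm_num
    · rw [if_neg hne, if_pos rfl]
      norm_num

noncomputable def Phi : MvPolynomial (Fin n) K →ₐ[K]
    AddMonoidAlgebra K ((Fin n → ℤ) ⧸ Submodule.span ℤ (genSet b n)) :=
  MvPolynomial.aeval (fun m =>
    AddMonoidAlgebra.single ((Submodule.span ℤ (genSet b n)).mkQ (Pi.single m (1:ℤ))) (1:K))

def iov (w : Fin n →₀ ℕ) : Fin n → ℤ := fun m => (w m : ℤ)

lemma iov_sum (w : Fin n →₀ ℕ) :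
    iov n w = ∑ m : Fin n, (w m : ℤ) • Pi.single m (1:ℤ) := by
  funext m'
  rw [Finset.sum_apply]
  have h : ∀ m : Fin n, (((w m : ℤ) • Pi.single m (1:ℤ) : Fin n → ℤ)) m'
      = if m' = m then (w m : ℤ) else 0 := by
    intro m
    rw [Pi.smul_apply, Pi.single_apply]
    split_ifs <;> simp
  rw [Finset.sum_congr rfl (fun m _ => h m), Finset.sum_ite_eq Finset.univ m' (fun m => (w m : ℤ))]
  rw [if_pos (Finset.mem_univ m')]
  rfl

lemma Phi_monomial (w : Fin n →₀ ℕ) (c : K) :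
    Phi K b n (MvPolynomial.monomial w c)
      = AddMonoidAlgebra.single ((Submodule.span ℤ (genSet b n)).mkQ (iov n w)) c := by
  unfold Phi
  rw [MvPolynomial.aeval_monomial]
  set π := (Submodule.span ℤ (genSet b n)).mkQ with hπ
  have h1 : (w.prod fun m e => AddMonoidAlgebra.single (π (Pi.single m (1:ℤ))) (1:K) ^ e)
      = AddMonoidAlgebra.single (π (iov n w)) 1 := by
    rw [Finsupp.prod]
    have h2 : ∀ m ∈ w.support,
        AddMonoidAlgebra.single (π (Pi.single m (1:ℤ))) (1:K) ^ w m
          = AddMonoidAlgebra.single ((w m) • π (Pi.single m (1:ℤ))) 1 := by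
      intro m _
      rw [AddMonoidAlgebra.single_pow, one_pow]
    rw [Finset.prod_congr rfl h2, AddMonoidAlgebra.prod_single, Finset.prod_const_one]
    congr 1
    have h3 : ∀ m : Fin n, (w m) • π (Pi.single m (1:ℤ)) = π ((w m : ℤ) • Pi.single m (1:ℤ)) := by
      intro m
      rw [map_smul]
      exact (natCast_zsmul _ _).symm
    rw [Finset.sum_congr rfl (fun m _ => h3 m), ← map_sum]
    have h4 : ∑ m ∈ w.support, (w m : ℤ) • Pi.single m (1:ℤ)
        = ∑ m : Fin n, (w m : ℤ) • Pi.single m (1:ℤ) := by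
      apply Finset.sum_subset (Finset.subset_univ _)
      intro m _ hm
      rw [Finsupp.notMem_support_iff.mp hm]
      simp
    rw [h4, ← iov_sum]
  rw [h1]
  rw [show (algebraMap K (AddMonoidAlgebra K ((Fin n → ℤ) ⧸ Submodule.span ℤ (genSet b n)))) c
    = AddMonoidAlgebra.single 0 c from rfl]
  rw [AddMonoidAlgebra.single_mul_single, zero_add, mul_one]

lemma iov_sub_eq_gv (j l : ℕ) (hj : 1 ≤ j) (hjl : j < l) (hl : l ≤ n - 1) (hn : 4 ≤ n)
    (x1 y1 x2 y2 : Fin n) (h1 : (x1:ℕ) = j) (h2 : (y1:ℕ) = l - 1)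
    (h3 : (x2:ℕ) = j - 1) (h4 : (y2:ℕ) = l) :
    iov n (W1e n b x1 y1) - iov n (W2e n b x2 y2) = gv b n j l := by
  funext m
  rw [Pi.sub_apply]
  unfold iov W1e W2e gv gfun
  rw [Finsupp.add_apply, Finsupp.add_apply, Finsupp.single_apply, Finsupp.single_apply,
    Finsupp.single_apply, Finsupp.single_apply]
  simp only [Fin.ext_iff, h1, h2, h3, h4]
  have hm : (m:ℕ) < n := m.2
  split_ifs <;> push_cast <;> omega

end


end SP
namespace SP

lemma rep_succ (b m : ℕ) : rep b (m+1) = b * rep b m + 1 := by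
  unfold rep
  rw [Finset.sum_range_succ']
  simp only [pow_succ, pow_zero]
  rw [← Finset.sum_mul]
  ring

lemma aseq_id (a b n j l : ℕ) (hj : 1 ≤ j) (hl : 1 ≤ l) :
    aseq a b n (j+1) + b * aseq a b n l = b * aseq a b n j + aseq a b n (l+1) := by
  obtain ⟨j', rfl⟩ : ∃ j', j = j'+1 := ⟨j-1, by omega⟩
  obtain ⟨l', rfl⟩ : ∃ l', l = l'+1 := ⟨l-1, by omega⟩
  unfold aseq
  simp only [Nat.add_sub_cancel]
  rw [rep_succ b j', rep_succ b l']
  ring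

lemma W1e_apply (n b : ℕ) (x y m : Fin n) :
    W1e n b x y m = (if x = m then 1 else 0) + (if y = m then b else 0) := by
  unfold W1e
  rw [Finsupp.add_apply, Finsupp.single_apply, Finsupp.single_apply]

lemma W2e_apply (n b : ℕ) (x y m : Fin n) :
    W2e n b x y m = (if x = m then b else 0) + (if y = m then 1 else 0) := by
  unfold W2e
  rw [Finsupp.add_apply, Finsupp.single_apply, Finsupp.single_apply]

lemma wdeg_two (a b n : ℕ) (x y : Fin n) (c d : ℕ) :
    wdeg a b n (fun m => (Finsupp.single x c + Finsupp.single y d : Fin n →₀ ℕ) m)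
      = c * aseq a b n ((x:ℕ)+1) + d * aseq a b n ((y:ℕ)+1) := by
  unfold wdeg
  have h : ∀ m : Fin n,
      ((Finsupp.single x c + Finsupp.single y d : Fin n →₀ ℕ) m) * aseq a b n ((m:ℕ)+1)
      = (if x = m then c * aseq a b n ((m:ℕ)+1) else 0)
        + (if y = m then d * aseq a b n ((m:ℕ)+1) else 0) := by
    intro m
    rw [Finsupp.add_apply, Finsupp.single_apply, Finsupp.single_apply]
    split_ifs <;> ring
  rw [Finset.sum_congr rfl (fun m _ => h m), Finset.sum_add_distrib,
    Finset.sum_ite_eq Finset.univ x (fun m => c * aseq a b n ((m:ℕ)+1)),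
    Finset.sum_ite_eq Finset.univ y (fun m => d * aseq a b n ((m:ℕ)+1)),
    if_pos (Finset.mem_univ _), if_pos (Finset.mem_univ _)]

lemma rankv_inj (n i : ℕ) (hi : i ≤ n) (m1 m2 : Fin n)
    (h : rankv n i m1 = rankv n i m2) : m1 = m2 := by
  unfold rankv at h
  have h1 := m1.2
  have h2 := m2.2
  apply Fin.ext
  split_ifs at h <;> omega

lemma prec_asymm (a b n i : ℕ) (hi : i ≤ n) (x y : Fin n → ℕ)
    (h1 : prec a b n i x y) (h2 : prec a b n i y x) : False := by
  unfold prec at h1 h2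
  rcases h1 with h1 | ⟨he1, m1, hm1, hall1⟩
  · rcases h2 with h2 | ⟨he2, _⟩
    · omega
    · omega
  · rcases h2 with h2 | ⟨he2, m2, hm2, hall2⟩
    · omega
    · rcases lt_trichotomy (rankv n i m1) (rankv n i m2) with hr | hr | hr
      · have := hall2 m1 hr
        omega
      · have := rankv_inj n i hi m1 m2 hr
        subst this
        omega
      · have := hall1 m2 hr
        omega

lemma wdeg_W1W2 (a b n i j l : ℕ) (hj : 1 ≤ j) (hjl : j < l) (hl : l ≤ n-1) (hn : 4 ≤ n)
    (x1 y1 x2 y2 : Fin n) (h1 : (x1:ℕ) = j) (h2 : (y1:ℕ) = l-1)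
    (h3 : (x2:ℕ) = j-1) (h4 : (y2:ℕ) = l) :
    wdeg a b n (fun m => W2e n b x2 y2 m) = wdeg a b n (fun m => W1e n b x1 y1 m) := by
  unfold W1e W2e
  rw [wdeg_two, wdeg_two, h1, h2, h3, h4]
  rw [show j-1+1 = j by omega, show l-1+1 = l by omega]
  have := aseq_id a b n j l hj (by omega)
  omega

lemma prec_minor_T1 (a b n i j l : ℕ) (hb : 1 ≤ b) (hn : 4 ≤ n) (hi1 : 1 ≤ i) (hi2 : i ≤ n)
    (hj : 1 ≤ j) (hjl : j < l) (hl : l ≤ n-1)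
    (x1 y1 x2 y2 : Fin n) (h1 : (x1:ℕ) = j) (h2 : (y1:ℕ) = l-1)
    (h3 : (x2:ℕ) = j-1) (h4 : (y2:ℕ) = l)
    (hside : i ≤ j ∨ l+1 ≤ i) :
    prec a b n i (fun m => W2e n b x2 y2 m) (fun m => W1e n b x1 y1 m) := by
  right
  refine ⟨wdeg_W1W2 a b n i j l hj hjl hl hn x1 y1 x2 y2 h1 h2 h3 h4, ?_⟩
  by_cases hij : i = j
  · -- witness x2  (position j)
    refine ⟨x2, ?_, ?_⟩
    · simp only [W1e_apply, W2e_apply, Fin.ext_iff, h1, h2, h3, h4]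
      split_ifs <;> omega
    · intro m' hr
      exfalso
      unfold rankv at hr
      have hb1 := m'.2
      simp only [h3] at hr
      split_ifs at hr <;> omega
  · -- witness y2  (position l+1)
    have hii : i < j ∨ l+1 ≤ i := by omega
    refine ⟨y2, ?_, ?_⟩
    · simp only [W1e_apply, W2e_apply, Fin.ext_iff, h1, h2, h3, h4]
      split_ifs <;> omega
    · intro m' hr
      have hout : (m':ℕ)+1 < j ∨ l+1 < (m':ℕ)+1 := by
        unfold rankv at hr
        have hbm := m'.2
        have hby := y2.2
        simp only [h4] at hr
        split_ifs at hr <;> omega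
      simp only [W1e_apply, W2e_apply, Fin.ext_iff, h1, h2, h3, h4]
      split_ifs <;> omega

lemma prec_minor_T2 (a b n i j l : ℕ) (hb : 1 ≤ b) (hn : 4 ≤ n) (hi1 : 1 ≤ i) (hi2 : i ≤ n)
    (hj : 1 ≤ j) (hjl : j < l) (hl : l ≤ n-1)
    (x1 y1 x2 y2 : Fin n) (h1 : (x1:ℕ) = j) (h2 : (y1:ℕ) = l-1)
    (h3 : (x2:ℕ) = j-1) (h4 : (y2:ℕ) = l)
    (hside : j+1 ≤ i ∧ i ≤ l) :
    prec a b n i (fun m => W1e n b x1 y1 m) (fun m => W2e n b x2 y2 m) := by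
  right
  refine ⟨(wdeg_W1W2 a b n i j l hj hjl hl hn x1 y1 x2 y2 h1 h2 h3 h4).symm, ?_⟩
  by_cases hil : i = l
  · -- witness y1 (position l)
    refine ⟨y1, ?_, ?_⟩
    · simp only [W1e_apply, W2e_apply, Fin.ext_iff, h1, h2, h3, h4]
      split_ifs <;> omega
    · intro m' hr
      exfalso
      unfold rankv at hr
      have hb1 := m'.2
      simp only [h2] at hr
      split_ifs at hr <;> omega
  · -- witness x1 (position j+1), with j+1 ≤ i < l
    have hii : i < l := by omega
    refine ⟨x1, ?_, ?_⟩
    · simp only [W1e_apply, W2e_apply, Fin.ext_iff, h1, h2, h3, h4]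
      split_ifs <;> omega
    · intro m' hr
      have hout : j+1 < (m':ℕ)+1 ∧ (m':ℕ)+1 ≤ i := by
        unfold rankv at hr
        have hbm := m'.2
        simp only [h1] at hr
        split_ifs at hr <;> omega
      simp only [W1e_apply, W2e_apply, Fin.ext_iff, h1, h2, h3, h4]
      split_ifs <;> omega

lemma wdeg_gv (a b n j l : ℕ) (hj : 1 ≤ j) (hjl : j < l) (hl : l ≤ n-1) (hn : 4 ≤ n) :
    ∑ m : Fin n, gv b n j l m * (aseq a b n ((m:ℕ)+1) : ℤ) = 0 := by
  have e1 : ∀ m : Fin n, ((m:ℕ)+1 = j+1) = ((⟨j, by omega⟩ : Fin n) = m) := by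
    intro m; apply propext; rw [Fin.ext_iff]; simp only [Fin.val_mk]; omega
  have e2 : ∀ m : Fin n, ((m:ℕ)+1 = l) = ((⟨l-1, by omega⟩ : Fin n) = m) := by
    intro m; apply propext; rw [Fin.ext_iff]; simp only [Fin.val_mk]; omega
  have e3 : ∀ m : Fin n, ((m:ℕ)+1 = j) = ((⟨j-1, by omega⟩ : Fin n) = m) := by
    intro m; apply propext; rw [Fin.ext_iff]; simp only [Fin.val_mk]; omega
  have e4 : ∀ m : Fin n, ((m:ℕ)+1 = l+1) = ((⟨l, by omega⟩ : Fin n) = m) := by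
    intro m; apply propext; rw [Fin.ext_iff]; simp only [Fin.val_mk]; omega
  have h : ∀ m : Fin n, gv b n j l m * (aseq a b n ((m:ℕ)+1) : ℤ)
      = (if (⟨j, by omega⟩ : Fin n) = m then (aseq a b n ((m:ℕ)+1) : ℤ) else 0)
        + ((b:ℤ) * if (⟨l-1, by omega⟩ : Fin n) = m then (aseq a b n ((m:ℕ)+1) : ℤ) else 0)
        - ((b:ℤ) * if (⟨j-1, by omega⟩ : Fin n) = m then (aseq a b n ((m:ℕ)+1) : ℤ) else 0)
        - (if (⟨l, by omega⟩ : Fin n) = m then (aseq a b n ((m:ℕ)+1) : ℤ) else 0) := by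
    intro m
    unfold gv gfun
    simp only [e1 m, e2 m, e3 m, e4 m]
    split_ifs <;> first | ring | (exfalso; simp only [Fin.ext_iff, Fin.val_mk] at *; omega)
  rw [Finset.sum_congr rfl (fun m _ => h m)]
  rw [Finset.sum_sub_distrib, Finset.sum_sub_distrib, Finset.sum_add_distrib,
    ← Finset.mul_sum, ← Finset.mul_sum]
  rw [Finset.sum_ite_eq Finset.univ (⟨j, by omega⟩ : Fin n),
    Finset.sum_ite_eq Finset.univ (⟨l-1, by omega⟩ : Fin n),
    Finset.sum_ite_eq Finset.univ (⟨j-1, by omega⟩ : Fin n),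
    Finset.sum_ite_eq Finset.univ (⟨l, by omega⟩ : Fin n)]
  simp only [if_pos (Finset.mem_univ _), Fin.val_mk]
  rw [show j-1+1 = j by omega, show l-1+1 = l by omega]
  have := aseq_id a b n j l hj (by omega)
  omega

lemma wdeg_span_zero (a b n : ℕ) (hn : 4 ≤ n) (d : Fin n → ℤ)
    (hd : d ∈ Submodule.span ℤ (genSet b n)) :
    ∑ m : Fin n, d m * (aseq a b n ((m:ℕ)+1) : ℤ) = 0 := by
  induction hd using Submodule.span_induction with
  | mem x hx =>
    obtain ⟨j, l, hj, hjl, hl, rfl⟩ := hx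
    exact wdeg_gv a b n j l hj hjl hl hn
  | zero => simp
  | add x y hx hy ihx ihy =>
    have : ∀ m : Fin n, (x + y) m * (aseq a b n ((m:ℕ)+1) : ℤ)
        = x m * (aseq a b n ((m:ℕ)+1) : ℤ) + y m * (aseq a b n ((m:ℕ)+1) : ℤ) := by
      intro m; rw [Pi.add_apply]; ring
    rw [Finset.sum_congr rfl (fun m _ => this m), Finset.sum_add_distrib, ihx, ihy]
    ring
  | smul c x hx ihx =>
    have : ∀ m : Fin n, (c • x) m * (aseq a b n ((m:ℕ)+1) : ℤ)
        = c * (x m * (aseq a b n ((m:ℕ)+1) : ℤ)) := by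
      intro m; rw [Pi.smul_apply, smul_eq_mul]; ring
    rw [Finset.sum_congr rfl (fun m _ => this m), ← Finset.mul_sum, ihx]
    ring

end SP
namespace SP

lemma pad_apply (n : ℕ) (d : Fin n → ℤ) (p : ℕ) (h1 : 1 ≤ p) (h2 : p ≤ n)
    (x : Fin n) (hx : (x:ℕ) = p - 1) : pad n d p = d x := by
  unfold pad
  rw [dif_pos ⟨h1, h2⟩]
  exact congrArg d (Fin.ext (by simp only [Fin.val_mk]; omega))

lemma Phi_vanish (K : Type*) [Field K] (b n : ℕ) (hb : 1 ≤ b) (hn : 4 ≤ n)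
    (f : MvPolynomial (Fin n) K) (hf : f ∈ Ideal.span (minorsY K b n)) :
    Phi K b n f = 0 := by
  have hker : Ideal.span (minorsY K b n) ≤ RingHom.ker (Phi K b n) := by
    rw [Ideal.span_le]
    rintro g ⟨j, l, hj, hjl, hl, rfl⟩
    rw [SetLike.mem_coe, RingHom.mem_ker]
    have hjn : j < n := by omega
    have hln : l < n := by omega
    have hj1n : j - 1 < n := by omega
    have hl1n : l - 1 < n := by omega
    have hmeq := minor_eq K b n j l hj hjl hl hn ⟨j, hjn⟩ ⟨l-1, hl1n⟩ ⟨j-1, hj1n⟩ ⟨l, hln⟩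
      rfl rfl rfl rfl
    rw [hmeq, map_sub, Phi_monomial, Phi_monomial]
    have hq : (Submodule.span ℤ (genSet b n)).mkQ (iov n (W1e n b ⟨j, hjn⟩ ⟨l-1, hl1n⟩))
        = (Submodule.span ℤ (genSet b n)).mkQ (iov n (W2e n b ⟨j-1, hj1n⟩ ⟨l, hln⟩)) := by
      rw [Submodule.mkQ_apply, Submodule.mkQ_apply, Submodule.Quotient.eq]
      rw [iov_sub_eq_gv b n j l hj hjl hl hn _ _ _ _ rfl rfl rfl rfl]
      exact Submodule.subset_span ⟨j, l, hj, hjl, hl, rfl⟩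
    rw [hq, sub_self]
  exact hker hf

lemma exists_partner (K : Type*) [Field K] (b n : ℕ) (hb : 1 ≤ b) (hn : 4 ≤ n)
    (f : MvPolynomial (Fin n) K) (hf : f ∈ Ideal.span (minorsY K b n))
    (u : Fin n →₀ ℕ) (hu : u ∈ f.support) :
    ∃ v ∈ f.support, v ≠ u ∧ iov n u - iov n v ∈ Submodule.span ℤ (genSet b n) := by
  by_contra hc
  push_neg at hc
  have h0 : Phi K b n f = 0 := Phi_vanish K b n hb hn f hf
  have hsum : ∑ w ∈ f.support,
      AddMonoidAlgebra.single ((Submodule.span ℤ (genSet b n)).mkQ (iov n w))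
        (MvPolynomial.coeff w f) = 0 := by
    have hrw := congrArg (Phi K b n) (MvPolynomial.support_sum_monomial_coeff f)
    rw [map_sum] at hrw
    rw [← h0, ← hrw]
    exact Finset.sum_congr rfl (fun w _ => (Phi_monomial K b n w _).symm)
  have hsum' : (∑ w ∈ f.support,
      Finsupp.single ((Submodule.span ℤ (genSet b n)).mkQ (iov n w)) (MvPolynomial.coeff w f)
      : ((Fin n → ℤ) ⧸ Submodule.span ℤ (genSet b n)) →₀ K) = 0 := by
    have := congrArg AddMonoidAlgebra.coeff hsum
    simpa only [AddMonoidAlgebra.coeff_sum, AddMonoidAlgebra.coeff_single,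
      AddMonoidAlgebra.coeff_zero] using this
  have happ := DFunLike.congr_fun hsum' ((Submodule.span ℤ (genSet b n)).mkQ (iov n u))
  rw [Finsupp.finset_sum_apply] at happ
  have hterm : ∀ w ∈ f.support,
      (Finsupp.single ((Submodule.span ℤ (genSet b n)).mkQ (iov n w))
        (MvPolynomial.coeff w f)) ((Submodule.span ℤ (genSet b n)).mkQ (iov n u))
      = if w = u then MvPolynomial.coeff w f else 0 := by
    intro w hw
    by_cases hwu : w = u
    · subst hwu
      rw [if_pos rfl]
      exact Finsupp.single_eq_same
    · rw [if_neg hwu]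
      apply Finsupp.single_eq_of_ne'
      intro he
      rw [Submodule.mkQ_apply, Submodule.mkQ_apply, Submodule.Quotient.eq] at he
      have hneg := Submodule.neg_mem _ he
      rw [neg_sub] at hneg
      exact hc w hw hwu hneg
  rw [Finset.sum_congr rfl hterm,
    Finset.sum_ite_eq' f.support u (fun w => MvPolynomial.coeff w f), if_pos hu] at happ
  have hz : MvPolynomial.coeff u f = 0 := by simpa using happ
  exact MvPolynomial.mem_support_iff.mp hu hz

end SP

theorem stmt7 (a b n : ℕ) (ha : 0 < a) (hb : 0 < b) (hn : 3 < n)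
    (i : ℕ) (hi1 : 1 ≤ i) (hi2 : i ≤ n) (K : Type*) [Field K]
    (f : MvPolynomial (Fin n) K) (hf : f ∈ Ideal.span (minorsY K b n)) (hf0 : f ≠ 0)
    (u : Fin n →₀ ℕ) (hu : IsLead a b n i f u) :
    ∃ j l : ℕ, 1 ≤ j ∧ j < l ∧ l ≤ n - 1 ∧
      ∀ w : Fin n →₀ ℕ,
        IsLead a b n i (xv K n (j + 1) * xv K n l ^ b - xv K n j ^ b * xv K n (l + 1)) w →
          ∀ m : Fin n, w m ≤ u m := by
  have hn4 : 4 ≤ n := by omega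
  have hb1 : 1 ≤ b := hb
  unfold IsLead at hu
  obtain ⟨huS, hulead⟩ := hu
  obtain ⟨v, hvS, hvne, hdmem⟩ := SP.exists_partner K b n hb1 hn4 f hf u huS
  set d : Fin n → ℤ := SP.iov n u - SP.iov n v with hdd
  have hdapp : ∀ x : Fin n, d x = (u x : ℤ) - (v x : ℤ) := fun x => rfl
  obtain ⟨hδ0, hδn, hrec, hsum⟩ := SP.delta_facts b n (by omega) d hdmem
  have hprec := hulead v hvS hvne
  have hwz := SP.wdeg_span_zero a b n hn4 d hdmem
  have hweq : wdeg a b n (fun m => v m) = wdeg a b n (fun m => u m) := by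
    have hcast : ((wdeg a b n (fun m => u m) : ℤ)) - ((wdeg a b n (fun m => v m) : ℤ))
        = ∑ m : Fin n, d m * (aseq a b n ((m:ℕ)+1) : ℤ) := by
      unfold wdeg
      push_cast
      rw [← Finset.sum_sub_distrib]
      apply Finset.sum_congr rfl
      intro m _
      rw [hdapp m]
      ring
    omega
  rcases hprec with hlt | ⟨heq, ms, hms, hall⟩
  · rw [hweq] at hlt
    exact absurd hlt (lt_irrefl _)
  · -- set up keyLemma
    have hmsn : (ms:ℕ) < n := ms.2
    have hms' : (u ms : ℕ) < v ms := hms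
    have hne : SP.pad n d ((ms:ℕ)+1) ≤ -1 := by
      rw [SP.pad_apply n d ((ms:ℕ)+1) (by omega) (by omega) ms (by omega), hdapp]
      omega
    have hz0 : ∀ q, 1 ≤ q → q ≤ n → SP.rk n i q < SP.rk n i ((ms:ℕ)+1) →
        SP.pad n d q = 0 := by
      intro q h1 h2 hrk
      have hfin : q - 1 < n := by omega
      have hq : rankv n i ⟨q-1, hfin⟩ < rankv n i ms := by
        have e1 : SP.rk n i q = rankv n i ⟨q-1, hfin⟩ := by
          unfold SP.rk rankv
          simp only [Fin.val_mk]
          rw [show q-1+1 = q by omega]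
        have e2 : SP.rk n i ((ms:ℕ)+1) = rankv n i ms := by
          unfold SP.rk rankv
          simp only [Nat.add_sub_cancel]
        rw [← e1, ← e2]
        exact hrk
      have hev : (v ⟨q-1, hfin⟩ : ℕ) = u ⟨q-1, hfin⟩ := hall ⟨q-1, hfin⟩ hq
      rw [SP.pad_apply n d q h1 h2 ⟨q-1, hfin⟩ rfl, hdapp]
      omega
    have hud : ∀ p, 1 ≤ p → p ≤ n → SP.pad n d p ≤ SP.pad n (SP.iov n u) p := by
      intro p h1 h2
      have hfin : p - 1 < n := by omega
      rw [SP.pad_apply n d p h1 h2 ⟨p-1, hfin⟩ rfl,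
        SP.pad_apply n (SP.iov n u) p h1 h2 ⟨p-1, hfin⟩ rfl, hdapp]
      have : (0:ℤ) ≤ (v ⟨p-1, hfin⟩ : ℤ) := Int.natCast_nonneg _
      unfold SP.iov
      omega
    have hGoal := SP.keyLemma b n i hb1 hn4 hi1 hi2 (SP.pad n d)
      (fun k => SP.Ee b n (SP.pad n d) (n - k)) (SP.pad n (SP.iov n u))
      hδn hδ0 hrec hsum hud ((ms:ℕ)+1) (by omega) (by omega) hne hz0
    unfold SP.Goal at hGoal
    obtain ⟨j, l, hj, hjl, hl, hcases⟩ := hGoal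
    refine ⟨j, l, hj, hjl, hl, ?_⟩
    intro w hw
    have hjn : j < n := by omega
    have hln : l < n := by omega
    have hj1n : j - 1 < n := by omega
    have hl1n : l - 1 < n := by omega
    have hmeq := SP.minor_eq K b n j l hj hjl hl hn4 ⟨j, hjn⟩ ⟨l-1, hl1n⟩ ⟨j-1, hj1n⟩ ⟨l, hln⟩
      rfl rfl rfl rfl
    rw [hmeq] at hw
    unfold IsLead at hw
    obtain ⟨hwS, hwlead⟩ := hw
    have hW12 : SP.W1e n b ⟨j, hjn⟩ ⟨l-1, hl1n⟩ ≠ SP.W2e n b ⟨j-1, hj1n⟩ ⟨l, hln⟩ :=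
      SP.W1e_ne_W2e b n j l hj hjl hl hb1 _ _ _ _ rfl rfl rfl rfl
    have hsupp := SP.support_binomial K n hW12
    rw [hsupp] at hwS
    have hw12 : w = SP.W1e n b ⟨j, hjn⟩ ⟨l-1, hl1n⟩ ∨ w = SP.W2e n b ⟨j-1, hj1n⟩ ⟨l, hln⟩ := by
      rcases Finset.mem_insert.mp hwS with h | h
      · exact Or.inl h
      · exact Or.inr (Finset.mem_singleton.mp h)
    have hpadu : ∀ p, 1 ≤ p → p ≤ n → ∀ x : Fin n, (x:ℕ) = p - 1 →
        SP.pad n (SP.iov n u) p = (u x : ℤ) :=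
      fun p h1 h2 x hx => SP.pad_apply n (SP.iov n u) p h1 h2 x hx
    rcases hcases with ⟨hside, hbounds⟩ | ⟨hside, hbv1, hbv2⟩
    · -- lead is W1e
      have hpw := SP.prec_minor_T1 a b n i j l hb1 hn4 hi1 hi2 hj hjl hl
        ⟨j, hjn⟩ ⟨l-1, hl1n⟩ ⟨j-1, hj1n⟩ ⟨l, hln⟩ rfl rfl rfl rfl (by omega)
      have hwW1 : w = SP.W1e n b ⟨j, hjn⟩ ⟨l-1, hl1n⟩ := by
        rcases hw12 with h | h
        · exact h
        · exfalso
          have hpl := hwlead (SP.W1e n b ⟨j, hjn⟩ ⟨l-1, hl1n⟩)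
            (by rw [hsupp]; exact Finset.mem_insert_self _ _)
            (by rw [h]; exact hW12)
          rw [h] at hpl
          exact SP.prec_asymm a b n i hi2 _ _ hpl hpw
      subst hwW1
      intro m
      rw [SP.W1e_apply]
      rcases hbounds with ⟨hlt2, hc1, hc2⟩ | ⟨heq2, hc1⟩
      · have hu1 : 1 ≤ (u ⟨j, hjn⟩ : ℤ) := by
          rw [← hpadu (j+1) (by omega) (by omega) ⟨j, hjn⟩ (by simp)]
          exact hc1
        have hu2 : (b:ℤ) ≤ (u ⟨l-1, hl1n⟩ : ℤ) := by
          rw [← hpadu l (by omega) (by omega) ⟨l-1, hl1n⟩ (by simp)]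
          exact hc2
        by_cases hx : (⟨j, hjn⟩ : Fin n) = m
        · by_cases hy : (⟨l-1, hl1n⟩ : Fin n) = m
          · exfalso
            rw [← hx] at hy
            have := congrArg Fin.val hy
            simp only [Fin.val_mk] at this
            omega
          · rw [if_pos hx, if_neg hy]
            have := hx ▸ hu1
            omega
        · rw [if_neg hx]
          by_cases hy : (⟨l-1, hl1n⟩ : Fin n) = m
          · rw [if_pos hy]
            have := hy ▸ hu2
            omega
          · rw [if_neg hy]
            omega
      · have hxy : (⟨j, hjn⟩ : Fin n) = ⟨l-1, hl1n⟩ := Fin.ext (by simp only [Fin.val_mk]; omega)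
        have hu1 : (b:ℤ)+1 ≤ (u ⟨l-1, hl1n⟩ : ℤ) := by
          rw [← hpadu l (by omega) (by omega) ⟨l-1, hl1n⟩ (by simp)]
          exact hc1
        rw [hxy]
        by_cases hy : (⟨l-1, hl1n⟩ : Fin n) = m
        · rw [if_pos hy, if_pos hy]
          have := hy ▸ hu1
          omega
        · rw [if_neg hy, if_neg hy]
          omega
    · -- lead is W2e
      have hpw := SP.prec_minor_T2 a b n i j l hb1 hn4 hi1 hi2 hj hjl hl
        ⟨j, hjn⟩ ⟨l-1, hl1n⟩ ⟨j-1, hj1n⟩ ⟨l, hln⟩ rfl rfl rfl rfl (by omega)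
      have hwW2 : w = SP.W2e n b ⟨j-1, hj1n⟩ ⟨l, hln⟩ := by
        rcases hw12 with h | h
        · exfalso
          have hpl := hwlead (SP.W2e n b ⟨j-1, hj1n⟩ ⟨l, hln⟩)
            (by rw [hsupp]; exact Finset.mem_insert_of_mem (Finset.mem_singleton_self _))
            (by rw [h]; exact hW12.symm)
          rw [h] at hpl
          exact SP.prec_asymm a b n i hi2 _ _ hpl hpw
        · exact h
      subst hwW2
      intro m
      rw [SP.W2e_apply]
      have hu1 : (b:ℤ) ≤ (u ⟨j-1, hj1n⟩ : ℤ) := by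
        rw [← hpadu j (by omega) (by omega) ⟨j-1, hj1n⟩ (by simp)]
        exact hbv1
      have hu2 : 1 ≤ (u ⟨l, hln⟩ : ℤ) := by
        rw [← hpadu (l+1) (by omega) (by omega) ⟨l, hln⟩ (by simp)]
        exact hbv2
      by_cases hx : (⟨j-1, hj1n⟩ : Fin n) = m
      · by_cases hy : (⟨l, hln⟩ : Fin n) = m
        · exfalso
          rw [← hx] at hy
          have := congrArg Fin.val hy
          simp only [Fin.val_mk] at this
          omega
        · rw [if_pos hx, if_neg hy]
          have := hx ▸ hu1
          omega
      · rw [if_neg hx]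
        by_cases hy : (⟨l, hln⟩ : Fin n) = m
        · rw [if_pos hy]
          have := hy ▸ hu2
          omega
        · rw [if_neg hy]
          omega
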